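/- For a satisfiable C^m I-net N on a finite multiset M, and M_a, M_b ⊆ M: M_a >_N M_b if and only if there is a sequence of worsening flips from M_a to M_b with respect to N. -/

import Mathlib

variable {O : Type*} [DecidableEq O]

/-- A strict partial order: irreflexive, asymmetric, transitive. -/
def IsPrefRel {α : Type*} (r : α → α → Prop) : Prop :=
  (∀ a, ¬ r a a) ∧ (∀ a b, r a b → ¬ r b a) ∧ (∀ a b c, r a b → r b c → r a c)

/-- A `CᵐI`-statement `M⁺, M⁻ : M₁ ▷ M₂` on the finite multiset `M`. -/
structure CmIStmt (O : Type*) [DecidableEq O] (M : Multiset O) where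
  mp : Multiset O
  mm : Multiset O
  m1 : Multiset O
  m2 : Multiset O
  hp : mp ≤ M
  hm : mm ≤ M - mp
  h1 : m1 ≤ M - (mp + mm)
  h2 : m2 ≤ M - (mp + mm)
  n1 : m1 ≠ 0
  n2 : m2 ≠ 0
  d12 : m1 ∩ m2 = 0

/-- `r` satisfies a `CᵐI`-statement. -/
def SatCmStmt (M : Multiset O) (r : Multiset O → Multiset O → Prop)
    (c : CmIStmt O M) : Prop :=
  ∀ M' ≤ M - (c.mp + c.mm + c.m1 + c.m2),
    r (M' + c.mp + c.m1) (M' + c.mp + c.m2)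

/-- Monotonicity on sub-multisets of `M`. -/
def MonotonicOn (M : Multiset O) (r : Multiset O → Multiset O → Prop) : Prop :=
  ∀ a b : Multiset O, a ≤ M → b < a → r a b

/-- Strict-partial-order conditions restricted to sub-multisets of `M`. -/
def IsPrefRelOn (M : Multiset O) (r : Multiset O → Multiset O → Prop) : Prop :=
  (∀ a, a ≤ M → ¬ r a a) ∧
  (∀ a b, a ≤ M → b ≤ M → r a b → ¬ r b a) ∧
  (∀ a b c, a ≤ M → b ≤ M → c ≤ M → r a b → r b c → r a c)

/-- `r` satisfies a `CᵐI`-net. -/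
def SatCmNet (M : Multiset O) (r : Multiset O → Multiset O → Prop)
    (N : Set (CmIStmt O M)) : Prop :=
  MonotonicOn M r ∧ ∀ c ∈ N, SatCmStmt M r c

/-- Satisfiability of a `CᵐI`-net. -/
def CmSatisfiable (M : Multiset O) (N : Set (CmIStmt O M)) : Prop :=
  ∃ r : Multiset O → Multiset O → Prop, IsPrefRelOn M r ∧ SatCmNet M r N

/-- CI-flip with respect to a single `CᵐI`-statement. -/
def CmFlipStmt (M : Multiset O) (c : CmIStmt O M) (a b : Multiset O) : Prop :=
  ∃ M' ≤ M - (c.mp + c.mm + c.m1 + c.m2),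
    a = M' + c.mp + c.m1 ∧ b = M' + c.mp + c.m2

/-- Worsening flip for a `CᵐI`-net: a `⊃`-flip within `M` or a CI-flip. -/
def CmWFlip (M : Multiset O) (N : Set (CmIStmt O M)) (a b : Multiset O) : Prop :=
  (b < a ∧ a ≤ M) ∨ ∃ c ∈ N, CmFlipStmt M c a b

/-- The intersection of all preference relations satisfying `N`. -/
def CmInduced (M : Multiset O) (N : Set (CmIStmt O M)) (a b : Multiset O) : Prop :=
  ∀ r : Multiset O → Multiset O → Prop, IsPrefRelOn M r ∧ SatCmNet M r N → r a b

lemma stmt_sum_le (M : Multiset O) (c : CmIStmt O M) :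
    c.mp + c.mm + c.m1 + c.m2 ≤ M := by
  have h12 : c.m1 + c.m2 = c.m1 ∪ c.m2 := by
    rw [← Multiset.union_add_inter, c.d12, add_zero]
  have hmm : c.mp + c.mm ≤ M := by
    have := c.hm
    rwa [le_tsub_iff_left c.hp] at this
  have h12' : c.m1 ∪ c.m2 ≤ M - (c.mp + c.mm) := Multiset.union_le c.h1 c.h2
  have : c.mp + c.mm + (c.m1 + c.m2) ≤ (c.mp + c.mm) + (M - (c.mp + c.mm)) := by
    rw [h12]; exact add_le_add le_rfl h12'
  rw [add_tsub_cancel_of_le hmm] at this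
  rwa [add_assoc]

lemma flip_le (M : Multiset O) (c : CmIStmt O M) {M' : Multiset O}
    (hM' : M' ≤ M - (c.mp + c.mm + c.m1 + c.m2)) :
    M' + c.mp + c.m1 ≤ M ∧ M' + c.mp + c.m2 ≤ M := by
  have hk : M' + (c.mp + c.mm + c.m1 + c.m2) ≤ M :=
    (le_tsub_iff_right (stmt_sum_le M c)).mp hM'
  constructor
  · refine le_trans ?_ hk
    simp only [Multiset.le_iff_count, Multiset.count_add]
    intro o; omega
  · refine le_trans ?_ hk
    simp only [Multiset.le_iff_count, Multiset.count_add]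
    intro o; omega

lemma wflip_prop {M : Multiset O} {N : Set (CmIStmt O M)}
    {r : Multiset O → Multiset O → Prop} (hr : SatCmNet M r N) {a b : Multiset O}
    (wf : CmWFlip M N a b) (haM : a ≤ M) : r a b ∧ b ≤ M := by
  rcases wf with ⟨hba, haM'⟩ | ⟨c, hc, M', hM', rfl, rfl⟩
  · exact ⟨hr.1 a b haM' hba, hba.le.trans haM'⟩
  · exact ⟨hr.2 c hc M' hM', (flip_le M c hM').2⟩

lemma transgen_prop {M : Multiset O} {N : Set (CmIStmt O M)}
    {r : Multiset O → Multiset O → Prop} (hpr : IsPrefRelOn M r)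
    (hr : SatCmNet M r N) {a b : Multiset O} (haM : a ≤ M)
    (h : Relation.TransGen (CmWFlip M N) a b) : r a b ∧ b ≤ M := by
  induction h with
  | single w => exact wflip_prop hr w haM
  | tail _ w ih =>
    obtain ⟨rab, hbM⟩ := ih
    obtain ⟨rbc, hcM⟩ := wflip_prop hr w hbM
    exact ⟨hpr.2.2 _ _ _ haM hbM hcM rab rbc, hcM⟩

/-- for a satisfiable `CᵐI`-net on `M` and sub-multisets
`Ma, Mb ⊆ M`, the induced relation coincides with reachability by sequences of
worsening flips. -/
theorem stmt_11 (M : Multiset O) (N : Set (CmIStmt O M))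
    (h : CmSatisfiable M N) (Ma Mb : Multiset O) (ha : Ma ≤ M) (hb : Mb ≤ M) :
    CmInduced M N Ma Mb ↔ Relation.TransGen (CmWFlip M N) Ma Mb := by
  obtain ⟨r₀, hpr₀, hsat₀⟩ := h
  constructor
  · intro hind
    refine hind (Relation.TransGen (CmWFlip M N)) ⟨?_, ?_, ?_⟩
    · refine ⟨fun a haM hTG => ?_, fun a b haM hbM hab hba => ?_,
        fun a b c _ _ _ hab hbc => hab.trans hbc⟩
      · exact hpr₀.1 a haM (transgen_prop hpr₀ hsat₀ haM hTG).1
      · exact hpr₀.1 a haM (transgen_prop hpr₀ hsat₀ haM (hab.trans hba)).1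
    · exact fun a b haM hba => .single (Or.inl ⟨hba, haM⟩)
    · exact fun c hc M' hM' => .single (Or.inr ⟨c, hc, M', hM', rfl, rfl⟩)
  · intro hTG r ⟨hpr, hsat⟩
    exact (transgen_prop hpr hsat ha hTG).1
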